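/- If G is a countable group which has an infinite weakly amenable subgroup, then for every reasonable pointclass Γ, (Γ, E_G)-determinacy implies Γ-determinacy. -/
import Mathlib


open Filter Set

/-- The position (list of moves) consisting of the first `n` moves of the run `x`. -/
def initSeg {S : Type*} (x : ℕ → S) (n : ℕ) : List S := List.ofFn (fun i : Fin n => x i)

/-- The run `x` is compatible with player I using strategy `σ`. -/
def FollowsStratI {S : Type*} (σ : List S → S) (x : ℕ → S) : Prop :=
  ∀ n, x (2 * n) = σ (initSeg x (2 * n))

/-- The run `x` is compatible with player II using strategy `τ`. -/
def FollowsStratII {S : Type*} (τ : List S → S) (x : ℕ → S) : Prop :=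
  ∀ n, x (2 * n + 1) = τ (initSeg x (2 * n + 1))

/-- The game with payoff set `A` (for player I) is determined. -/
def GameDetermined {S : Type*} (A : Set (ℕ → S)) : Prop :=
  (∃ σ : List S → S, ∀ x, FollowsStratI σ x → x ∈ A) ∨
  (∃ τ : List S → S, ∀ x, FollowsStratII τ x → x ∉ A)

/-- A pointclass: a collection of subsets of topological (in particular Polish) spaces closed
under continuous preimages. -/
structure Pointclass : Type 1 where
  mem : ∀ (X : Type) [TopologicalSpace X], Set (Set X)
  continuous_preimage : ∀ (X Y : Type) [TopologicalSpace X] [TopologicalSpace Y]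
    (f : X → Y), Continuous f → ∀ A : Set Y, A ∈ mem Y → f ⁻¹' A ∈ mem X

/-- `sigmaLevel X n` is the pointclass `Σ⁰_{n+1}` of subsets of `X`. -/
def sigmaLevel (X : Type) [TopologicalSpace X] : ℕ → Set (Set X)
  | 0 => {s | IsOpen s}
  | (n + 1) => {s | ∃ f : ℕ → Set X, (∀ k, (f k)ᶜ ∈ sigmaLevel X n) ∧ s = ⋃ k, f k}

/-- `Δ⁰₆` sets: both `Σ⁰₆` and `Π⁰₆`. -/
def IsDelta06 {X : Type} [TopologicalSpace X] (s : Set X) : Prop :=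
  s ∈ sigmaLevel X 5 ∧ sᶜ ∈ sigmaLevel X 5

/-- A function is `Δ⁰₆`-measurable if preimages of open sets are `Δ⁰₆`. -/
def Delta06Measurable {X Y : Type} [TopologicalSpace X] [TopologicalSpace Y] (f : X → Y) : Prop :=
  ∀ U : Set Y, IsOpen U → IsDelta06 (f ⁻¹' U)

/-- A reasonable pointclass: closed under unions and intersections with `Δ⁰₆` sets and under
substitution by `Δ⁰₆`-measurable functions. -/
structure Reasonable (Γ : Pointclass) : Prop where
  union_delta : ∀ (X : Type) [TopologicalSpace X] (A B : Set X),
    A ∈ Γ.mem X → IsDelta06 B → A ∪ B ∈ Γ.mem X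
  inter_delta : ∀ (X : Type) [TopologicalSpace X] (A B : Set X),
    A ∈ Γ.mem X → IsDelta06 B → A ∩ B ∈ Γ.mem X
  delta_subst : ∀ (X Y : Type) [TopologicalSpace X] [TopologicalSpace Y] (f : X → Y),
    Delta06Measurable f → ∀ A : Set Y, A ∈ Γ.mem Y → f ⁻¹' A ∈ Γ.mem X

/-- `Γ`-determinacy for games with moves in `S`: every `Γ` subset of `S^ω` is determined. -/
def GammaDetOn (Γ : Pointclass) (S : Type) [TopologicalSpace S] : Prop :=
  ∀ A : Set (ℕ → S), A ∈ Γ.mem (ℕ → S) → GameDetermined A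

/-- The orbit equivalence relation of the left shift action of `G` on `S^G`:
`y = g · x` where `(g · x)(h) = x (g⁻¹ h)`. -/
def ShiftRel (G : Type*) {S : Type*} [Group G] (x y : G → S) : Prop :=
  ∃ g : G, ∀ h : G, y h = x (g⁻¹ * h)

/-- `(Γ, E_G)`-determinacy for the shift action of `G` on `S^G`: every `E_G`-invariant `Γ`
subset of `S^G` has determined preimage under the homeomorphism `S^ω ≃ S^G` induced by any
enumeration `π` of `G`. -/
def GammaShiftDet (Γ : Pointclass) (G : Type) [Group G] (S : Type) [TopologicalSpace S] : Prop :=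
  ∀ A : Set (G → S), A ∈ Γ.mem (G → S) →
    (∀ x y : G → S, ShiftRel G x y → (x ∈ A ↔ y ∈ A)) →
    ∀ π : ℕ ≃ G, GameDetermined {x : ℕ → S | (fun g => x (π.symm g)) ∈ A}

/-- Condition (2) of appropriateness: for each `g`, each class `C` meets at most `b` classes
after translation by `g`. -/
def classBound {G : Type*} [Group G] (r : Setoid G) (g : G) (b : ℕ) : Prop :=
  ∀ C : Quotient r,
    {C' : Quotient r | ∃ h : G, Quotient.mk r h = C ∧ Quotient.mk r (g * h) = C'}.encard ≤ (b : ℕ∞)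

/-- An appropriate equivalence relation on a group `G`. -/
def AppropriateRel {G : Type*} [Group G] (r : Setoid G) : Prop :=
  Infinite (Quotient r) ∧ ∀ g : G, ∃ b : ℕ, classBound r g b

/-- The increasing sequence `A n` of finite sets of `∼`-classes witnesses the Følner-type
condition in the definition of weak amenability. -/
def WAWitness {G : Type*} [Group G] (r : Setoid G) (A : ℕ → Finset (Quotient r)) : Prop :=
  Monotone A ∧ (∀ C : Quotient r, ∃ n, C ∈ A n) ∧
    ∀ g : G, Filter.Tendsto (fun n =>
      (({C : Quotient r | C ∈ A n ∧
          ∀ h : G, Quotient.mk r h = C → Quotient.mk r (g * h) ∈ A n}.ncard : ℝ)) /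
        ((A n).card : ℝ)) Filter.atTop (nhds 1)

/-- A group is weakly amenable if it is finite or carries an appropriate equivalence relation
together with a witnessing increasing sequence of finite sets of classes. -/
def WeaklyAmenable (G : Type*) [Group G] : Prop :=
  Finite G ∨ ∃ (r : Setoid G) (A : ℕ → Finset (Quotient r)), AppropriateRel r ∧ WAWitness r A

section Hierarchy
variable {X : Type} [TopologicalSpace X]

lemma mem_sigmaLevel_zero {s : Set X} : s ∈ sigmaLevel X 0 ↔ IsOpen s := Iff.rfl

lemma mem_sigmaLevel_succ {s : Set X} {n : ℕ} :
    s ∈ sigmaLevel X (n+1) ↔ ∃ f : ℕ → Set X, (∀ k, (f k)ᶜ ∈ sigmaLevel X n) ∧ s = ⋃ k, f k :=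
  Iff.rfl

lemma clopen_mem_sigmaLevel {s : Set X} (hs : IsClopen s) : ∀ n, s ∈ sigmaLevel X n := by
  intro n
  induction n generalizing s with
  | zero => exact hs.isOpen
  | succ n ih =>
    refine ⟨fun k => if k = 0 then s else ∅, fun k => ?_, ?_⟩
    · by_cases h : k = 0
      · simpa [h] using ih hs.compl
      · simpa [h] using ih isClopen_univ
    · ext x; simp

lemma sigmaLevel_iUnion {n : ℕ} {f : ℕ → Set X} (hf : ∀ k, f k ∈ sigmaLevel X n) :
    (⋃ k, f k) ∈ sigmaLevel X n := by
  cases n with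
  | zero => exact isOpen_iUnion hf
  | succ n =>
    choose g hg hfg using hf
    refine ⟨fun m => g (Nat.unpair m).1 (Nat.unpair m).2, fun m => hg _ _, ?_⟩
    ext x
    simp only [mem_iUnion]
    constructor
    · rintro ⟨k, hk⟩
      rw [hfg k] at hk
      obtain ⟨j, hj⟩ := mem_iUnion.1 hk
      exact ⟨Nat.pair k j, by simpa [Nat.unpair_pair] using hj⟩
    · rintro ⟨m, hm⟩
      exact ⟨(Nat.unpair m).1, by rw [hfg]; exact mem_iUnion.2 ⟨(Nat.unpair m).2, hm⟩⟩

lemma sigmaLevel_inter_union (n : ℕ) :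
    ∀ s t : Set X, s ∈ sigmaLevel X n → t ∈ sigmaLevel X n →
      s ∩ t ∈ sigmaLevel X n ∧ s ∪ t ∈ sigmaLevel X n := by
  induction n with
  | zero => exact fun s t hs ht => ⟨IsOpen.inter hs ht, IsOpen.union hs ht⟩
  | succ n ih =>
    rintro s t ⟨f, hf, rfl⟩ ⟨g, hg, rfl⟩
    constructor
    · refine ⟨fun m => f (Nat.unpair m).1 ∩ g (Nat.unpair m).2, fun m => ?_, ?_⟩
      · rw [Set.compl_inter]
        exact (ih _ _ (hf _) (hg _)).2
      · ext x
        simp only [mem_inter_iff, mem_iUnion, mem_inter_iff]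
        constructor
        · rintro ⟨⟨k, hk⟩, ⟨j, hj⟩⟩
          exact ⟨Nat.pair k j, by simpa [Nat.unpair_pair] using ⟨hk, hj⟩⟩
        · rintro ⟨m, hm1, hm2⟩
          exact ⟨⟨_, hm1⟩, ⟨_, hm2⟩⟩
    · refine ⟨fun m => if Even m then f (m / 2) else g (m / 2), fun m => ?_, ?_⟩
      · by_cases h : Even m <;> simp only [h, if_true, if_false] <;> [exact hf _; exact hg _]
      · ext x
        simp only [mem_union, mem_iUnion]
        constructor
        · rintro (⟨k, hk⟩ | ⟨k, hk⟩)
          · exact ⟨2 * k, by simp [Nat.even_iff, Nat.mul_div_cancel_left, hk, Nat.mul_mod_right]⟩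
          · refine ⟨2 * k + 1, ?_⟩
            have h1 : ¬ Even (2 * k + 1) := by simp [Nat.even_iff, Nat.mul_mod_right]
            have h2 : (2 * k + 1) / 2 = k := by omega
            simp [h1, h2, hk]
        · rintro ⟨m, hm⟩
          by_cases h : Even m
          · simp only [h, if_true] at hm; exact Or.inl ⟨_, hm⟩
          · simp only [h, if_false] at hm; exact Or.inr ⟨_, hm⟩

lemma sigmaLevel_inter {n : ℕ} {s t : Set X} (hs : s ∈ sigmaLevel X n) (ht : t ∈ sigmaLevel X n) :
    s ∩ t ∈ sigmaLevel X n := (sigmaLevel_inter_union n s t hs ht).1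

lemma sigmaLevel_union {n : ℕ} {s t : Set X} (hs : s ∈ sigmaLevel X n) (ht : t ∈ sigmaLevel X n) :
    s ∪ t ∈ sigmaLevel X n := (sigmaLevel_inter_union n s t hs ht).2

lemma sigmaLevel_compl_succ {n : ℕ} {s : Set X} (hs : s ∈ sigmaLevel X n) :
    sᶜ ∈ sigmaLevel X (n+1) := by
  refine ⟨fun k => if k = 0 then sᶜ else ∅, fun k => ?_, ?_⟩
  · by_cases h : k = 0
    · simpa [h] using hs
    · simpa [h] using clopen_mem_sigmaLevel isClopen_univ n
  · ext x; simp

lemma sigmaLevel_iInter_succ {n : ℕ} {f : ℕ → Set X} (hf : ∀ k, (f k)ᶜ ∈ sigmaLevel X n) :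
    (⋂ k, f k) ∈ sigmaLevel X (n+1) := by
  refine ⟨fun k => if k = 0 then ⋂ j, f j else ∅, fun k => ?_, ?_⟩
  · by_cases h : k = 0
    · simp only [h, if_true, Set.compl_iInter]
      exact sigmaLevel_iUnion hf
    · simpa [h] using clopen_mem_sigmaLevel isClopen_univ n
  · ext x; simp

end Hierarchy
section Basis
set_option linter.unusedSectionVars false
variable {S : Type} [TopologicalSpace S] [DiscreteTopology S] [Countable S] [Inhabited S]

lemma coord_clopen (i : ℕ) (v : S) : IsClopen {x : ℕ → S | x i = v} := by
  have : {x : ℕ → S | x i = v} = (fun x : ℕ → S => x i) ⁻¹' {v} := by ext x; simp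
  rw [this]
  exact ⟨(isClosed_discrete {v}).preimage (continuous_apply i),
    (isOpen_discrete {v}).preimage (continuous_apply i)⟩

def cylSet (L : List S) : Set (ℕ → S) := {x | ∀ i, i < L.length → x i = L.getD i default}

lemma cylSet_clopen (L : List S) : IsClopen (cylSet L) := by
  have : cylSet L = ⋂ i : Fin L.length, {x : ℕ → S | x i.1 = L.getD i.1 default} := by
    ext x
    simp only [cylSet, Set.mem_iInter, Set.mem_setOf_eq]
    exact ⟨fun h i => h i.1 i.2, fun h i hi => h ⟨i, hi⟩⟩
  rw [this]
  exact ⟨isClosed_iInter fun i => (coord_clopen _ _).1,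
    isOpen_iInter_of_finite fun i => (coord_clopen _ _).2⟩

lemma initSeg_length {x : ℕ → S} {n : ℕ} : (initSeg x n).length = n := by
  simp [initSeg]

lemma initSeg_getD {x : ℕ → S} {n i : ℕ} (h : i < n) (d : S) :
    (initSeg x n).getD i d = x i := by
  rw [List.getD_eq_getElem?_getD, initSeg]
  rw [List.getElem?_eq_getElem (by simpa using h)]
  simp

lemma mem_cylSet_initSeg (x : ℕ → S) (n : ℕ) : x ∈ cylSet (initSeg x n) := by
  intro i hi
  rw [initSeg_length] at hi
  rw [initSeg_getD hi]

lemma open_eq_iUnion_cyl {U : Set (ℕ → S)} (hU : IsOpen U) :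
    ∃ c : ℕ → Option (List S), U = ⋃ k, Option.elim (c k) ∅ cylSet := by
  classical
  set F : Set (Option (List S)) := insert none {o | ∃ L : List S, o = some L ∧ cylSet L ⊆ U}
    with hF
  have hFc : F.Countable := Set.to_countable F
  obtain ⟨c, hc⟩ := hFc.exists_eq_range ⟨none, Set.mem_insert _ _⟩
  refine ⟨c, ?_⟩
  ext x
  constructor
  · intro hx
    obtain ⟨I, u, hu, hsub⟩ := isOpen_pi_iff.1 hU x hx
    set n := I.sup id + 1 with hn
    have hcyl : cylSet (initSeg x n) ⊆ U := by
      intro y hy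
      apply hsub
      intro i hi
      have hin : i < n := by
        have : id i ≤ I.sup id := Finset.le_sup hi
        simp only [id_eq] at this; omega
      have := hy i (by rwa [initSeg_length])
      rw [initSeg_getD hin] at this
      rw [this]
      exact (hu i hi).2
    have : some (initSeg x n) ∈ F := Set.mem_insert_iff.2 (Or.inr ⟨_, rfl, hcyl⟩)
    rw [hc] at this
    obtain ⟨k, hk⟩ := this
    refine Set.mem_iUnion.2 ⟨k, ?_⟩
    simp only [hk, Option.elim]
    exact mem_cylSet_initSeg x n
  · intro hx
    obtain ⟨k, hk⟩ := Set.mem_iUnion.1 hx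
    have : c k ∈ F := by rw [hc]; exact ⟨k, rfl⟩
    rw [hF] at this
    rcases Set.mem_insert_iff.1 this with h | ⟨L, hL, hsub⟩
    · rw [h] at hk; exact absurd hk (by simp)
    · rw [hL] at hk; exact hsub hk

lemma open_mem_sigmaLevel {U : Set (ℕ → S)} (hU : IsOpen U) (n : ℕ) :
    U ∈ sigmaLevel (ℕ → S) n := by
  cases n with
  | zero => exact hU
  | succ n =>
    obtain ⟨c, rfl⟩ := open_eq_iUnion_cyl hU
    refine ⟨fun k => Option.elim (c k) ∅ cylSet, fun k => ?_, rfl⟩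
    cases h : c k with
    | none =>
      simp only [h]
      simp only [Option.elim, Set.compl_empty]
      exact clopen_mem_sigmaLevel isClopen_univ n
    | some L =>
      simp only [h]
      simp only [Option.elim]
      exact clopen_mem_sigmaLevel (cylSet_clopen L).compl n

lemma sigmaLevel_mono {s : Set (ℕ → S)} {n : ℕ} (hs : s ∈ sigmaLevel (ℕ → S) n) :
    s ∈ sigmaLevel (ℕ → S) (n+1) := by
  induction n generalizing s with
  | zero => exact open_mem_sigmaLevel hs 1
  | succ n ih =>
    obtain ⟨f, hf, rfl⟩ := hs
    exact ⟨f, fun k => ih (hf k), rfl⟩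

lemma sigmaLevel_le {s : Set (ℕ → S)} {n m : ℕ} (h : n ≤ m) (hs : s ∈ sigmaLevel (ℕ → S) n) :
    s ∈ sigmaLevel (ℕ → S) m := by
  induction m with
  | zero => rwa [Nat.le_zero.1 h] at hs
  | succ m ih =>
    rcases Nat.lt_or_ge n (m+1) with h' | h'
    · exact sigmaLevel_mono (ih (by omega))
    · rwa [show n = m + 1 by omega] at hs

end Basis
section Enum
set_option linter.unusedSectionVars false
variable {G : Type} [Group G] [Infinite G] [DecidableEq G]

noncomputable def pick (U : Finset G) : G := U.exists_notMem.choose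

lemma pick_spec (U : Finset G) : pick U ∉ U := U.exists_notMem.choose_spec

variable (pseq : ℕ → G)

noncomputable def stA (U : Finset G) (q : G) : G := pick (U ∪ U.image (fun x => q⁻¹ * x))

lemma stA_notmem (U : Finset G) (q : G) : stA U q ∉ U := by
  have := pick_spec (U ∪ U.image (fun x => q⁻¹ * x))
  simp only [Finset.mem_union, not_or] at this
  exact this.1

lemma stA_mul_notmem (U : Finset G) (q : G) : q * stA U q ∉ U := by
  have := pick_spec (U ∪ U.image (fun x => q⁻¹ * x))
  simp only [Finset.mem_union, not_or, Finset.mem_image, not_exists] at this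
  intro hmem
  exact (this.2 (q * stA U q)) ⟨hmem, by rw [inv_mul_cancel_left]; rfl⟩

lemma stA_mul_ne (U : Finset G) (q : G) (hq : q ≠ 1) : q * stA U q ≠ stA U q := by
  intro h
  apply hq
  have h' : q * stA U q = 1 * stA U q := by rw [one_mul]; exact h
  exact mul_right_cancel h'

noncomputable def stB (U : Finset G) (q : G) : G :=
  stA (insert (stA U q) (insert (q * stA U q) U)) q

noncomputable def Dset (pseq : ℕ → G) : ℕ → Finset G
  | 0 => ∅
  | n + 1 =>
    let U := Dset pseq n
    let q := pseq n
    let a := stA U q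
    let b := stB U q
    let r := pick (insert a (insert (q * a) (insert b (insert (q * b) U))))
    insert a (insert (q * a) (insert b (insert (q * b) (insert r U))))

noncomputable def aseq (n : ℕ) : G := stA (Dset pseq n) (pseq n)
noncomputable def bseq (n : ℕ) : G := stB (Dset pseq n) (pseq n)
noncomputable def useq (n : ℕ) : G := pseq n * aseq pseq n
noncomputable def vseq (n : ℕ) : G := pseq n * bseq pseq n
noncomputable def rseq (n : ℕ) : G :=
  pick (insert (aseq pseq n) (insert (useq pseq n) (insert (bseq pseq n)
    (insert (vseq pseq n) (Dset pseq n)))))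

lemma Dset_succ (n : ℕ) : Dset pseq (n+1) =
    insert (aseq pseq n) (insert (useq pseq n) (insert (bseq pseq n)
      (insert (vseq pseq n) (insert (rseq pseq n) (Dset pseq n))))) := by
  rfl

lemma Dset_mono : Monotone (Dset pseq) := by
  apply monotone_nat_of_le_succ
  intro n
  rw [Dset_succ]
  intro x hx
  simp [hx]

lemma stage_subset (n : ℕ) :
    aseq pseq n ∈ Dset pseq (n+1) ∧ useq pseq n ∈ Dset pseq (n+1) ∧
    bseq pseq n ∈ Dset pseq (n+1) ∧ vseq pseq n ∈ Dset pseq (n+1) ∧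
    rseq pseq n ∈ Dset pseq (n+1) := by
  rw [Dset_succ]
  refine ⟨by simp, by simp, by simp, by simp, by simp⟩

lemma stage_fresh (n : ℕ) (hq : pseq n ≠ 1) :
    aseq pseq n ∉ Dset pseq n ∧ useq pseq n ∉ Dset pseq n ∧ useq pseq n ≠ aseq pseq n ∧
    bseq pseq n ∉ Dset pseq n ∧ bseq pseq n ≠ aseq pseq n ∧ bseq pseq n ≠ useq pseq n ∧
    vseq pseq n ∉ Dset pseq n ∧ vseq pseq n ≠ aseq pseq n ∧ vseq pseq n ≠ useq pseq n ∧
      vseq pseq n ≠ bseq pseq n ∧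
    rseq pseq n ∉ Dset pseq n ∧ rseq pseq n ≠ aseq pseq n ∧ rseq pseq n ≠ useq pseq n ∧
      rseq pseq n ≠ bseq pseq n ∧ rseq pseq n ≠ vseq pseq n := by
  set U := Dset pseq n
  set q := pseq n
  have ha : aseq pseq n = stA U q := rfl
  have hb : bseq pseq n = stB U q := rfl
  have hbA : bseq pseq n = stA (insert (stA U q) (insert (q * stA U q) U)) q := rfl
  have hu : useq pseq n = q * stA U q := rfl
  have hv : vseq pseq n = q * stB U q := rfl
  have h1 : stA U q ∉ U := stA_notmem U q
  have h2 : q * stA U q ∉ U := stA_mul_notmem U q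
  have h3 : q * stA U q ≠ stA U q := stA_mul_ne U q hq
  have h4 := stA_notmem (insert (stA U q) (insert (q * stA U q) U)) q
  have h5 := stA_mul_notmem (insert (stA U q) (insert (q * stA U q) U)) q
  have h6 := stA_mul_ne (insert (stA U q) (insert (q * stA U q) U)) q hq
  have hbdef : stB U q = stA (insert (stA U q) (insert (q * stA U q) U)) q := rfl
  rw [← hbdef] at h4 h5 h6
  simp only [Finset.mem_insert, not_or] at h4 h5
  have hr := pick_spec (insert (aseq pseq n) (insert (useq pseq n) (insert (bseq pseq n)
    (insert (vseq pseq n) (Dset pseq n)))))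
  simp only [Finset.mem_insert, not_or] at hr
  have hrr : rseq pseq n = pick (insert (aseq pseq n) (insert (useq pseq n) (insert (bseq pseq n)
    (insert (vseq pseq n) (Dset pseq n))))) := rfl
  refine ⟨by rw [ha]; exact h1, by rw [hu]; exact h2, by rw [hu, ha]; exact h3,
    by rw [hb]; exact h4.2.2, by rw [hb, ha]; exact h4.1, by rw [hb, hu]; exact h4.2.1,
    by rw [hv]; exact h5.2.2, by rw [hv, ha]; exact h5.1, by rw [hv, hu]; exact h5.2.1,
    by rw [hv, hb]; exact h6,
    hr.2.2.2.2, hr.1, hr.2.1, hr.2.2.1, hr.2.2.2.1⟩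

end Enum
section Enum2
set_option linter.unusedSectionVars false
set_option maxHeartbeats 1000000
variable {G : Type} [Group G] [Infinite G] [DecidableEq G]
variable (pseq : ℕ → G) (hp : ∀ n, pseq n ≠ 1)

lemma mem_Dset_of_lt {m n : ℕ} (h : m < n) :
    aseq pseq m ∈ Dset pseq n ∧ useq pseq m ∈ Dset pseq n ∧ bseq pseq m ∈ Dset pseq n ∧
    vseq pseq m ∈ Dset pseq n ∧ rseq pseq m ∈ Dset pseq n := by
  have hsub : Dset pseq (m+1) ⊆ Dset pseq n := Dset_mono pseq (by omega)
  obtain ⟨h1, h2, h3, h4, h5⟩ := stage_subset pseq m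
  exact ⟨hsub h1, hsub h2, hsub h3, hsub h4, hsub h5⟩

lemma cross_ne {s t : ℕ → G}
    (hsD : ∀ n, s n ∉ Dset pseq n) (htD : ∀ n, t n ∉ Dset pseq n)
    (hsS : ∀ n, s n ∈ Dset pseq (n+1)) (htS : ∀ n, t n ∈ Dset pseq (n+1))
    (hne : ∀ n, s n ≠ t n) : ∀ i j, s i ≠ t j := by
  intro i j h
  rcases lt_trichotomy i j with hij | rfl | hij
  · have hmem : s i ∈ Dset pseq j := Dset_mono pseq (by omega : i + 1 ≤ j) (hsS i)
    rw [h] at hmem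
    exact htD j hmem
  · exact hne i h
  · have hmem : t j ∈ Dset pseq i := Dset_mono pseq (by omega : j + 1 ≤ i) (htS j)
    rw [← h] at hmem
    exact hsD i hmem

lemma seq_inj {s : ℕ → G}
    (hsD : ∀ n, s n ∉ Dset pseq n) (hsS : ∀ n, s n ∈ Dset pseq (n+1)) :
    Function.Injective s := by
  intro i j h
  by_contra hne
  rcases lt_or_gt_of_ne hne with hij | hij
  · have hmem : s i ∈ Dset pseq j := Dset_mono pseq (by omega : i + 1 ≤ j) (hsS i)
    rw [h] at hmem
    exact hsD j hmem
  · have hmem : s j ∈ Dset pseq i := Dset_mono pseq (by omega : j + 1 ≤ i) (hsS j)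
    rw [← h] at hmem
    exact hsD i hmem

lemma aS (n : ℕ) : aseq pseq n ∈ Dset pseq (n+1) := (stage_subset pseq n).1
lemma uS (n : ℕ) : useq pseq n ∈ Dset pseq (n+1) := (stage_subset pseq n).2.1
lemma bS (n : ℕ) : bseq pseq n ∈ Dset pseq (n+1) := (stage_subset pseq n).2.2.1
lemma vS (n : ℕ) : vseq pseq n ∈ Dset pseq (n+1) := (stage_subset pseq n).2.2.2.1
lemma rS (n : ℕ) : rseq pseq n ∈ Dset pseq (n+1) := (stage_subset pseq n).2.2.2.2

include hp

-- abbreviations for freshness components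
lemma aD (n : ℕ) : aseq pseq n ∉ Dset pseq n := (stage_fresh pseq n (hp n)).1
lemma uD (n : ℕ) : useq pseq n ∉ Dset pseq n := (stage_fresh pseq n (hp n)).2.1
lemma bD (n : ℕ) : bseq pseq n ∉ Dset pseq n := (stage_fresh pseq n (hp n)).2.2.2.1
lemma vD (n : ℕ) : vseq pseq n ∉ Dset pseq n := (stage_fresh pseq n (hp n)).2.2.2.2.2.2.1
lemma rD (n : ℕ) : rseq pseq n ∉ Dset pseq n :=
  (stage_fresh pseq n (hp n)).2.2.2.2.2.2.2.2.2.2.1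


lemma ne_ua (i j : ℕ) : useq pseq i ≠ aseq pseq j :=
  cross_ne pseq (uD pseq hp) (aD pseq hp) (uS pseq) (aS pseq)
    (fun n => (stage_fresh pseq n (hp n)).2.2.1) i j
lemma ne_ba (i j : ℕ) : bseq pseq i ≠ aseq pseq j :=
  cross_ne pseq (bD pseq hp) (aD pseq hp) (bS pseq) (aS pseq)
    (fun n => (stage_fresh pseq n (hp n)).2.2.2.2.1) i j
lemma ne_bu (i j : ℕ) : bseq pseq i ≠ useq pseq j :=
  cross_ne pseq (bD pseq hp) (uD pseq hp) (bS pseq) (uS pseq)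
    (fun n => (stage_fresh pseq n (hp n)).2.2.2.2.2.1) i j
lemma ne_va (i j : ℕ) : vseq pseq i ≠ aseq pseq j :=
  cross_ne pseq (vD pseq hp) (aD pseq hp) (vS pseq) (aS pseq)
    (fun n => (stage_fresh pseq n (hp n)).2.2.2.2.2.2.2.1) i j
lemma ne_vu (i j : ℕ) : vseq pseq i ≠ useq pseq j :=
  cross_ne pseq (vD pseq hp) (uD pseq hp) (vS pseq) (uS pseq)
    (fun n => (stage_fresh pseq n (hp n)).2.2.2.2.2.2.2.2.1) i j
lemma ne_vb (i j : ℕ) : vseq pseq i ≠ bseq pseq j :=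
  cross_ne pseq (vD pseq hp) (bD pseq hp) (vS pseq) (bS pseq)
    (fun n => (stage_fresh pseq n (hp n)).2.2.2.2.2.2.2.2.2.1) i j
lemma ne_ra (i j : ℕ) : rseq pseq i ≠ aseq pseq j :=
  cross_ne pseq (rD pseq hp) (aD pseq hp) (rS pseq) (aS pseq)
    (fun n => (stage_fresh pseq n (hp n)).2.2.2.2.2.2.2.2.2.2.2.1) i j
lemma ne_ru (i j : ℕ) : rseq pseq i ≠ useq pseq j :=
  cross_ne pseq (rD pseq hp) (uD pseq hp) (rS pseq) (uS pseq)
    (fun n => (stage_fresh pseq n (hp n)).2.2.2.2.2.2.2.2.2.2.2.2.1) i j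
lemma ne_rb (i j : ℕ) : rseq pseq i ≠ bseq pseq j :=
  cross_ne pseq (rD pseq hp) (bD pseq hp) (rS pseq) (bS pseq)
    (fun n => (stage_fresh pseq n (hp n)).2.2.2.2.2.2.2.2.2.2.2.2.2.1) i j
lemma ne_rv (i j : ℕ) : rseq pseq i ≠ vseq pseq j :=
  cross_ne pseq (rD pseq hp) (vD pseq hp) (rS pseq) (vS pseq)
    (fun n => (stage_fresh pseq n (hp n)).2.2.2.2.2.2.2.2.2.2.2.2.2.2) i j

lemma a_inj : Function.Injective (aseq pseq) := seq_inj pseq (aD pseq hp) (aS pseq)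
lemma b_inj : Function.Injective (bseq pseq) := seq_inj pseq (bD pseq hp) (bS pseq)
lemma u_inj : Function.Injective (useq pseq) := seq_inj pseq (uD pseq hp) (uS pseq)
lemma v_inj : Function.Injective (vseq pseq) := seq_inj pseq (vD pseq hp) (vS pseq)
lemma r_inj : Function.Injective (rseq pseq) := seq_inj pseq (rD pseq hp) (rS pseq)

noncomputable def fseq (i : ℕ) : G := if Even i then aseq pseq (i / 2) else bseq pseq (i / 2)

lemma f_inj : Function.Injective (fseq pseq) := by
  intro i j h
  unfold fseq at h
  by_cases hi : Even i <;> by_cases hj : Even j <;> simp only [hi, hj, if_true, if_false] at h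
  · have := a_inj pseq hp h
    rcases hi with ⟨k, hk⟩; rcases hj with ⟨l, hl⟩; omega
  · exact absurd h.symm (ne_ba pseq hp _ _)
  · exact absurd h (ne_ba pseq hp _ _)
  · have := b_inj pseq hp h
    rcases Nat.not_even_iff_odd.1 hi with ⟨k, hk⟩
    rcases Nat.not_even_iff_odd.1 hj with ⟨l, hl⟩
    omega

lemma ne_fu (i j : ℕ) : fseq pseq i ≠ useq pseq j := by
  unfold fseq
  by_cases hi : Even i <;> simp only [hi, if_true, if_false]
  · exact fun h => (ne_ua pseq hp j (i/2)) h.symm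
  · exact ne_bu pseq hp _ _
lemma ne_fv (i j : ℕ) : fseq pseq i ≠ vseq pseq j := by
  unfold fseq
  by_cases hi : Even i <;> simp only [hi, if_true, if_false]
  · exact fun h => (ne_va pseq hp j (i/2)) h.symm
  · exact fun h => (ne_vb pseq hp j (i/2)) h.symm
lemma ne_rf (i j : ℕ) : rseq pseq i ≠ fseq pseq j := by
  unfold fseq
  by_cases hj : Even j <;> simp only [hj, if_true, if_false]
  · exact ne_ra pseq hp _ _
  · exact ne_rb pseq hp _ _

end Enum2
section Enum3
set_option maxHeartbeats 2000000

lemma exists_nice_enum (G : Type) [Group G] [Countable G] [Infinite G] :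
    ∃ π : ℕ ≃ G, ∀ p : G, p ≠ 1 →
      (∃ i j : ℕ, p * π (6*i) = π (6*j+2)) ∧ (∃ i j : ℕ, p * π (6*i) = π (6*j+3)) := by
  classical
  obtain ⟨e⟩ : Nonempty (ℕ ≃ G) := nonempty_equiv_of_countable
  obtain ⟨pstar, hpstar⟩ := exists_ne (1 : G)
  set pseq : ℕ → G := fun n => if e n = 1 then pstar else e n with hpseq
  have hp : ∀ n, pseq n ≠ 1 := by
    intro n
    simp only [hpseq]
    by_cases h : e n = 1 <;> simp [h, hpstar]
  have hps : ∀ q : G, q ≠ 1 → ∃ n, pseq n = q := by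
    intro q hq
    refine ⟨e.symm q, ?_⟩
    simp only [hpseq, Equiv.apply_symm_apply]
    simp [hq]
  set M : Set G := (Set.range (fseq pseq) ∪ Set.range (useq pseq) ∪ Set.range (vseq pseq))ᶜ
    with hM
  have hrM : ∀ n, rseq pseq n ∈ M := by
    intro n
    simp only [hM, Set.mem_compl_iff, Set.mem_union, Set.mem_range, not_or, not_exists]
    exact ⟨⟨fun j h => ne_rf pseq hp n j h.symm, fun j h => ne_ru pseq hp n j h.symm⟩,
      fun j h => ne_rv pseq hp n j h.symm⟩
  have hMinf : M.Infinite :=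
    Set.infinite_of_injective_forall_mem (r_inj pseq hp) hrM
  haveI : Infinite ↥M := hMinf.to_subtype
  obtain ⟨eM⟩ : Nonempty (ℕ ≃ ↥M) := nonempty_equiv_of_countable
  set π₀ : ℕ → G := fun n =>
    if n % 6 = 0 then fseq pseq (n / 6)
    else if n % 6 = 2 then useq pseq (n / 6)
    else if n % 6 = 3 then vseq pseq (n / 6)
    else if n % 6 = 1 then (eM (3 * (n / 6))).1
    else if n % 6 = 4 then (eM (3 * (n / 6) + 1)).1
    else (eM (3 * (n / 6) + 2)).1 with hπ₀
  have hfM : ∀ i k, fseq pseq i ≠ (eM k).1 := by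
    intro i k h
    have := (eM k).2
    rw [← h, hM] at this
    exact this (Or.inl (Or.inl ⟨i, rfl⟩))
  have huM : ∀ i k, useq pseq i ≠ (eM k).1 := by
    intro i k h
    have := (eM k).2
    rw [← h, hM] at this
    exact this (Or.inl (Or.inr ⟨i, rfl⟩))
  have hvM : ∀ i k, vseq pseq i ≠ (eM k).1 := by
    intro i k h
    have := (eM k).2
    rw [← h, hM] at this
    exact this (Or.inr ⟨i, rfl⟩)
  have heM : ∀ k l, (eM k).1 = (eM l).1 → k = l := by
    intro k l h
    exact eM.injective (Subtype.ext h)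
  have hinj : Function.Injective π₀ := by
    intro n₁ n₂ h
    have d1 : n₁ % 6 = 0 ∨ n₁ % 6 = 1 ∨ n₁ % 6 = 2 ∨ n₁ % 6 = 3 ∨ n₁ % 6 = 4 ∨ n₁ % 6 = 5 := by
      omega
    have d2 : n₂ % 6 = 0 ∨ n₂ % 6 = 1 ∨ n₂ % 6 = 2 ∨ n₂ % 6 = 3 ∨ n₂ % 6 = 4 ∨ n₂ % 6 = 5 := by
      omega
    simp only [hπ₀] at h
    rcases d1 with hm1 | hm1 | hm1 | hm1 | hm1 | hm1 <;>
      rcases d2 with hm2 | hm2 | hm2 | hm2 | hm2 | hm2 <;>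
      rw [hm1, hm2] at h <;> norm_num at h <;>
      first
        | (have := f_inj pseq hp h; omega)
        | (have := u_inj pseq hp h; omega)
        | (have := v_inj pseq hp h; omega)
        | (have := heM _ _ h; omega)
        | (exact absurd h (ne_fu pseq hp _ _))
        | (exact absurd h.symm (ne_fu pseq hp _ _))
        | (exact absurd h (ne_fv pseq hp _ _))
        | (exact absurd h.symm (ne_fv pseq hp _ _))
        | (exact absurd h (ne_vu pseq hp _ _))
        | (exact absurd h.symm (ne_vu pseq hp _ _))
        | (exact absurd h (hfM _ _))
        | (exact absurd h.symm (hfM _ _))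
        | (exact absurd h (huM _ _))
        | (exact absurd h.symm (huM _ _))
        | (exact absurd h (hvM _ _))
        | (exact absurd h.symm (hvM _ _))
  have hsurj : Function.Surjective π₀ := by
    intro g
    by_cases hg : g ∈ M
    · set k := eM.symm ⟨g, hg⟩ with hk
      have hgk : (eM k).1 = g := by rw [hk, Equiv.apply_symm_apply]
      have d3 : k % 3 = 0 ∨ k % 3 = 1 ∨ k % 3 = 2 := by omega
      rcases d3 with hd | hd | hd
      · refine ⟨6 * (k / 3) + 1, ?_⟩
        simp only [hπ₀]
        rw [show (6 * (k/3) + 1) % 6 = 1 by omega, show (6 * (k/3) + 1) / 6 = k / 3 by omega]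
        norm_num
        rw [show 3 * (k/3) = k by omega]
        exact hgk
      · refine ⟨6 * (k / 3) + 4, ?_⟩
        simp only [hπ₀]
        rw [show (6 * (k/3) + 4) % 6 = 4 by omega, show (6 * (k/3) + 4) / 6 = k / 3 by omega]
        norm_num
        rw [show 3 * (k/3) + 1 = k by omega]
        exact hgk
      · refine ⟨6 * (k / 3) + 5, ?_⟩
        simp only [hπ₀]
        rw [show (6 * (k/3) + 5) % 6 = 5 by omega, show (6 * (k/3) + 5) / 6 = k / 3 by omega]
        norm_num
        rw [show 3 * (k/3) + 2 = k by omega]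
        exact hgk
    · rw [hM, Set.notMem_compl_iff] at hg
      rcases hg with (⟨i, rfl⟩ | ⟨i, rfl⟩) | ⟨i, rfl⟩
      · refine ⟨6 * i, ?_⟩
        simp only [hπ₀]
        rw [show (6 * i) % 6 = 0 by omega, show (6 * i) / 6 = i by omega]
        norm_num
      · refine ⟨6 * i + 2, ?_⟩
        simp only [hπ₀]
        rw [show (6 * i + 2) % 6 = 2 by omega, show (6 * i + 2) / 6 = i by omega]
        norm_num
      · refine ⟨6 * i + 3, ?_⟩
        simp only [hπ₀]
        rw [show (6 * i + 3) % 6 = 3 by omega, show (6 * i + 3) / 6 = i by omega]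
        norm_num
  refine ⟨Equiv.ofBijective π₀ ⟨hinj, hsurj⟩, ?_⟩
  intro p hpne
  obtain ⟨n, hn⟩ := hps p hpne
  constructor
  · refine ⟨2 * n, n, ?_⟩
    have h1 : π₀ (6 * (2 * n)) = fseq pseq (2 * n) := by
      simp only [hπ₀]
      rw [show (6 * (2 * n)) % 6 = 0 by omega, show (6 * (2 * n)) / 6 = 2 * n by omega]
      norm_num
    have h2 : π₀ (6 * n + 2) = useq pseq n := by
      simp only [hπ₀]
      rw [show (6 * n + 2) % 6 = 2 by omega, show (6 * n + 2) / 6 = n by omega]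
      norm_num
    show p * π₀ (6 * (2 * n)) = π₀ (6 * n + 2)
    rw [h1, h2]
    have hf : fseq pseq (2 * n) = aseq pseq n := by
      unfold fseq
      rw [if_pos (even_two_mul n), show (2 * n) / 2 = n by omega]
    rw [hf, ← hn]
    rfl
  · refine ⟨2 * n + 1, n, ?_⟩
    have h1 : π₀ (6 * (2 * n + 1)) = fseq pseq (2 * n + 1) := by
      simp only [hπ₀]
      rw [show (6 * (2 * n + 1)) % 6 = 0 by omega, show (6 * (2 * n + 1)) / 6 = 2 * n + 1 by omega]
      norm_num
    have h2 : π₀ (6 * n + 3) = vseq pseq n := by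
      simp only [hπ₀]
      rw [show (6 * n + 3) % 6 = 3 by omega, show (6 * n + 3) / 6 = n by omega]
      norm_num
    show p * π₀ (6 * (2 * n + 1)) = π₀ (6 * n + 3)
    rw [h1, h2]
    have hf : fseq pseq (2 * n + 1) = bseq pseq n := by
      unfold fseq
      rw [if_neg (by simp [Nat.even_add_one]), show (2 * n + 1) / 2 = n by omega]
    rw [hf, ← hn]
    rfl

end Enum3
section Main
set_option linter.unusedSectionVars false
set_option maxHeartbeats 1000000
variable {S : Type} [TopologicalSpace S] [DiscreteTopology S] [Countable S] [Inhabited S]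
variable {G : Type} [Group G] [Countable G] [Infinite G]

/-- index of the `k`-th data coordinate -/
def dIdx (k : ℕ) : ℕ := if Even k then 6*k+4 else 6*k+5

def CohX (π : ℕ ≃ G) (onv zav : S) (p : G) (x : ℕ → S) : Prop :=
  (∀ i, x (π.symm (p * π (6*i))) = onv) ∧ (∀ i, x (π.symm (p * π (6*i+2))) = zav)

def GoodX (π : ℕ ≃ G) (onv zav : S) (x : ℕ → S) : Prop := ∃! p : G, CohX π onv zav p x

open Classical in
noncomputable def anchX (π : ℕ ≃ G) (onv zav : S) (x : ℕ → S) : G :=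
  if h : GoodX π onv zav x then h.exists.choose else 1

noncomputable def PhiX (π : ℕ ≃ G) (onv zav : S) (x : ℕ → S) : ℕ → S :=
  fun k => x (π.symm (anchX π onv zav x * π (dIdx k)))

variable (π : ℕ ≃ G) (onv zav : S)

lemma anchX_spec {x : ℕ → S} (h : GoodX π onv zav x) :
    CohX π onv zav (anchX π onv zav x) x ∧ ∀ q, CohX π onv zav q x → q = anchX π onv zav x := by
  rw [anchX]
  rw [dif_pos h]
  exact ⟨h.exists.choose_spec, fun q hq => h.unique hq h.exists.choose_spec⟩

lemma cohX_one {x : ℕ → S} (h0 : ∀ i, x (6*i) = onv) (h2 : ∀ i, x (6*i+2) = zav) :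
    CohX π onv zav 1 x := by
  constructor
  · intro i; rw [one_mul, Equiv.symm_apply_apply]; exact h0 i
  · intro i; rw [one_mul, Equiv.symm_apply_apply]; exact h2 i

lemma refute_via_I (hne : onv ≠ zav)
    (hC1 : ∀ p : G, p ≠ 1 → ∃ i j : ℕ, p * π (6*i) = π (6*j+2))
    {x : ℕ → S} (h2 : ∀ i, x (6*i+2) = zav) :
    ∀ p : G, p ≠ 1 → ¬ CohX π onv zav p x := by
  intro p hp hcoh
  obtain ⟨i, j, hij⟩ := hC1 p hp
  have := hcoh.1 i
  rw [hij, Equiv.symm_apply_apply] at this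
  rw [h2 j] at this
  exact hne this.symm

lemma refute_via_II (hne : onv ≠ zav)
    (hC2 : ∀ p : G, p ≠ 1 → ∃ i j : ℕ, p * π (6*i) = π (6*j+3))
    {x : ℕ → S} (h3 : ∀ i, x (6*i+3) = zav) :
    ∀ p : G, p ≠ 1 → ¬ CohX π onv zav p x := by
  intro p hp hcoh
  obtain ⟨i, j, hij⟩ := hC2 p hp
  have := hcoh.1 i
  rw [hij, Equiv.symm_apply_apply] at this
  rw [h3 j] at this
  exact hne this.symm

lemma goodX_of_refute {x : ℕ → S} (h1 : CohX π onv zav 1 x)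
    (href : ∀ p : G, p ≠ 1 → ¬ CohX π onv zav p x) :
    GoodX π onv zav x ∧ anchX π onv zav x = 1 := by
  have hg : GoodX π onv zav x := by
    refine ⟨1, h1, fun q hq => ?_⟩
    by_contra hq1
    exact href q hq1 hq
  exact ⟨hg, ((anchX_spec π onv zav hg).2 1 h1).symm⟩

lemma phiX_of_anch_one {x : ℕ → S} (h : anchX π onv zav x = 1) :
    ∀ k, PhiX π onv zav x k = x (dIdx k) := by
  intro k
  rw [PhiX, h, one_mul, Equiv.symm_apply_apply]

-- Topological complexity
def CohXset (p : G) : Set (ℕ → S) := {x | CohX π onv zav p x}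

lemma cohXset_levels (p : G) :
    CohXset π onv zav p ∈ sigmaLevel (ℕ → S) 1 ∧
    (CohXset π onv zav p)ᶜ ∈ sigmaLevel (ℕ → S) 1 := by
  have heq : CohXset π onv zav p =
      (⋂ i, {x : ℕ → S | x (π.symm (p * π (6*i))) = onv}) ∩
      (⋂ i, {x : ℕ → S | x (π.symm (p * π (6*i+2))) = zav}) := by
    ext x
    simp only [CohXset, CohX, Set.mem_inter_iff, Set.mem_iInter, Set.mem_setOf_eq]
  constructor
  · rw [heq]
    refine sigmaLevel_inter ?_ ?_
    · exact sigmaLevel_iInter_succ fun i => (coord_clopen _ _).compl.isOpen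
    · exact sigmaLevel_iInter_succ fun i => (coord_clopen _ _).compl.isOpen
  · rw [heq, Set.compl_inter, Set.compl_iInter, Set.compl_iInter]
    refine sigmaLevel_union ?_ ?_
    · exact sigmaLevel_iUnion fun i => clopen_mem_sigmaLevel (coord_clopen _ _).compl 1
    · exact sigmaLevel_iUnion fun i => clopen_mem_sigmaLevel (coord_clopen _ _).compl 1

open Classical in
noncomputable def WX (p : G) : Set (ℕ → S) :=
  CohXset π onv zav p ∩ ⋂ (k : ℕ), (if π k = p then Set.univ else (CohXset π onv zav (π k))ᶜ)

lemma mem_WX {p : G} {x : ℕ → S} :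
    x ∈ WX π onv zav p ↔ CohX π onv zav p x ∧ ∀ q, q ≠ p → ¬ CohX π onv zav q x := by
  classical
  constructor
  · rintro ⟨h1, h2⟩
    refine ⟨h1, fun q hq hcoh => ?_⟩
    have := Set.mem_iInter.1 h2 (π.symm q)
    by_cases hc : π (π.symm q) = p
    · rw [Equiv.apply_symm_apply] at hc; exact hq hc
    · rw [if_neg hc] at this
      rw [Equiv.apply_symm_apply] at this
      exact this hcoh
  · rintro ⟨h1, h2⟩
    refine ⟨h1, Set.mem_iInter.2 fun k => ?_⟩
    by_cases hk : π k = p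
    · simp [hk]
    · simp only [if_neg hk]; exact h2 (π k) hk

lemma wX_levels (p : G) :
    WX π onv zav p ∈ sigmaLevel (ℕ → S) 2 ∧ (WX π onv zav p)ᶜ ∈ sigmaLevel (ℕ → S) 1 := by
  classical
  have hite : ∀ k : ℕ, ((if π k = p then Set.univ else (CohXset π onv zav (π k))ᶜ) : Set (ℕ → S))ᶜ
      = (if π k = p then (∅ : Set (ℕ → S)) else CohXset π onv zav (π k)) := by
    intro k
    by_cases hk : π k = p <;> simp [hk]
  constructor
  · refine sigmaLevel_inter (sigmaLevel_mono (cohXset_levels π onv zav p).1) ?_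
    refine sigmaLevel_iInter_succ fun k => ?_
    rw [hite k]
    by_cases hk : π k = p
    · rw [if_pos hk]; exact clopen_mem_sigmaLevel isClopen_empty 1
    · rw [if_neg hk]; exact (cohXset_levels π onv zav (π k)).1
  · rw [WX, Set.compl_inter, Set.compl_iInter]
    refine sigmaLevel_union (cohXset_levels π onv zav p).2 ?_
    refine sigmaLevel_iUnion fun k => ?_
    rw [hite k]
    by_cases hk : π k = p
    · rw [if_pos hk]; exact clopen_mem_sigmaLevel isClopen_empty 1
    · rw [if_neg hk]; exact (cohXset_levels π onv zav (π k)).1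

end Main
section Main2
set_option linter.unusedSectionVars false
set_option maxHeartbeats 1000000
variable {S : Type} [TopologicalSpace S] [DiscreteTopology S] [Countable S] [Inhabited S]
variable {G : Type} [Group G] [Countable G] [Infinite G]
variable (π : ℕ ≃ G) (onv zav : S)

def GoodXset : Set (ℕ → S) := {x | GoodX π onv zav x}

lemma goodXset_eq : GoodXset π onv zav = ⋃ k : ℕ, WX π onv zav (π k) := by
  ext x
  simp only [GoodXset, Set.mem_setOf_eq, Set.mem_iUnion]
  constructor
  · intro h
    refine ⟨π.symm (anchX π onv zav x), ?_⟩
    rw [mem_WX]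
    obtain ⟨h1, h2⟩ := anchX_spec π onv zav h
    rw [Equiv.apply_symm_apply]
    exact ⟨h1, fun q hq hcoh => hq (h2 q hcoh)⟩
  · rintro ⟨k, hk⟩
    rw [mem_WX] at hk
    exact ⟨π k, hk.1, fun q hq => by
      by_contra hne
      exact hk.2 q hne hq⟩

lemma goodXset_levels :
    GoodXset π onv zav ∈ sigmaLevel (ℕ → S) 2 ∧
    (GoodXset π onv zav)ᶜ ∈ sigmaLevel (ℕ → S) 3 := by
  rw [goodXset_eq]
  constructor
  · exact sigmaLevel_iUnion fun k => (wX_levels π onv zav (π k)).1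
  · rw [Set.compl_iUnion]
    refine sigmaLevel_iInter_succ (n := 2) fun k => ?_
    rw [compl_compl]
    exact (wX_levels π onv zav (π k)).1

lemma goodXset_delta : IsDelta06 (GoodXset π onv zav) :=
  ⟨sigmaLevel_le (by omega) (goodXset_levels π onv zav).1,
   sigmaLevel_le (by omega) (goodXset_levels π onv zav).2⟩

lemma anchX_eq_of_mem_WX {p : G} {x : ℕ → S} (h : x ∈ WX π onv zav p) :
    anchX π onv zav x = p := by
  rw [mem_WX] at h
  have hg : GoodX π onv zav x := ⟨p, h.1, fun q hq => by
    by_contra hne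
    exact h.2 q hne hq⟩
  exact ((anchX_spec π onv zav hg).2 p h.1).symm

lemma phiX_coord_preimage (k : ℕ) (v : S) :
    PhiX π onv zav ⁻¹' {z : ℕ → S | z k = v} =
      (⋃ j : ℕ, (WX π onv zav (π j) ∩ {x : ℕ → S | x (π.symm (π j * π (dIdx k))) = v})) ∪
      ((GoodXset π onv zav)ᶜ ∩ {x : ℕ → S | x (dIdx k) = v}) := by
  ext x
  simp only [Set.mem_preimage, Set.mem_setOf_eq, Set.mem_union, Set.mem_iUnion,
    Set.mem_inter_iff, Set.mem_compl_iff]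
  by_cases hg : GoodX π onv zav x
  · constructor
    · intro h
      refine Or.inl ⟨π.symm (anchX π onv zav x), ?_, ?_⟩
      · rw [mem_WX, Equiv.apply_symm_apply]
        obtain ⟨h1, h2⟩ := anchX_spec π onv zav hg
        exact ⟨h1, fun q hq hcoh => hq (h2 q hcoh)⟩
      · rw [Equiv.apply_symm_apply]
        exact h
    · rintro (⟨j, hj, hval⟩ | ⟨hng, _⟩)
      · have := anchX_eq_of_mem_WX π onv zav hj
        rw [PhiX, this]
        exact hval
      · exact absurd hg hng
  · constructor
    · intro h
      refine Or.inr ⟨hg, ?_⟩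
      rw [PhiX, anchX, dif_neg hg, one_mul, Equiv.symm_apply_apply] at h
      exact h
    · rintro (⟨j, hj, hval⟩ | ⟨_, hval⟩)
      · exfalso
        rw [mem_WX] at hj
        exact hg ⟨π j, hj.1, fun q hq => by
          by_contra hne
          exact hj.2 q hne hq⟩
      · rw [PhiX, anchX, dif_neg hg, one_mul, Equiv.symm_apply_apply]
        exact hval

lemma phiX_coord_levels (k : ℕ) (v : S) :
    PhiX π onv zav ⁻¹' {z : ℕ → S | z k = v} ∈ sigmaLevel (ℕ → S) 3 ∧
    (PhiX π onv zav ⁻¹' {z : ℕ → S | z k = v})ᶜ ∈ sigmaLevel (ℕ → S) 3 := by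
  rw [phiX_coord_preimage]
  constructor
  · refine sigmaLevel_union (sigmaLevel_mono ?_) ?_
    · exact sigmaLevel_iUnion fun j => sigmaLevel_inter (wX_levels π onv zav (π j)).1
        (clopen_mem_sigmaLevel (coord_clopen _ _) 2)
    · exact sigmaLevel_inter (goodXset_levels π onv zav).2
        (clopen_mem_sigmaLevel (coord_clopen _ _) 3)
  · rw [Set.compl_union, Set.compl_iUnion]
    refine sigmaLevel_inter ?_ ?_
    · refine sigmaLevel_iInter_succ (n := 2) fun j => ?_
      rw [compl_compl]
      exact sigmaLevel_inter (wX_levels π onv zav (π j)).1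
        (clopen_mem_sigmaLevel (coord_clopen _ _) 2)
    · rw [Set.compl_inter, compl_compl]
      exact sigmaLevel_union (sigmaLevel_mono (goodXset_levels π onv zav).1)
        (clopen_mem_sigmaLevel (coord_clopen _ _).compl 3)

end Main2
section Main3
set_option linter.unusedSectionVars false
set_option maxHeartbeats 1000000
variable {S : Type} [TopologicalSpace S] [DiscreteTopology S] [Countable S] [Inhabited S]
variable {G : Type} [Group G] [Countable G] [Infinite G]
variable (π : ℕ ≃ G) (onv zav : S)

lemma phiX_cyl_preimage (L : List S) :
    PhiX π onv zav ⁻¹' cylSet L =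
      ⋂ i : ℕ, (if i < L.length
        then PhiX π onv zav ⁻¹' {z : ℕ → S | z i = L.getD i default}
        else Set.univ) := by
  classical
  ext x
  simp only [Set.mem_preimage, cylSet, Set.mem_setOf_eq, Set.mem_iInter]
  constructor
  · intro h i
    by_cases hi : i < L.length
    · rw [if_pos hi]; exact h i hi
    · rw [if_neg hi]; trivial
  · intro h i hi
    have := h i
    rw [if_pos hi] at this
    exact this

lemma phiX_cyl_levels (L : List S) :
    PhiX π onv zav ⁻¹' cylSet L ∈ sigmaLevel (ℕ → S) 4 ∧
    (PhiX π onv zav ⁻¹' cylSet L)ᶜ ∈ sigmaLevel (ℕ → S) 3 := by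
  classical
  rw [phiX_cyl_preimage]
  have hite : ∀ i : ℕ, ((if i < L.length
      then PhiX π onv zav ⁻¹' {z : ℕ → S | z i = L.getD i default}
      else Set.univ) : Set (ℕ → S))ᶜ =
      (if i < L.length
      then (PhiX π onv zav ⁻¹' {z : ℕ → S | z i = L.getD i default})ᶜ
      else ∅) := by
    intro i
    by_cases hi : i < L.length <;> simp [hi]
  constructor
  · refine sigmaLevel_iInter_succ (n := 3) fun i => ?_
    rw [hite i]
    by_cases hi : i < L.length
    · rw [if_pos hi]; exact (phiX_coord_levels π onv zav i _).2
    · rw [if_neg hi]; exact clopen_mem_sigmaLevel isClopen_empty 3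
  · rw [Set.compl_iInter]
    refine sigmaLevel_iUnion fun i => ?_
    rw [hite i]
    by_cases hi : i < L.length
    · rw [if_pos hi]; exact (phiX_coord_levels π onv zav i _).2
    · rw [if_neg hi]; exact clopen_mem_sigmaLevel isClopen_empty 3

lemma phiX_delta06 : Delta06Measurable (PhiX π onv zav) := by
  intro U hU
  obtain ⟨c, rfl⟩ := open_eq_iUnion_cyl hU
  rw [Set.preimage_iUnion]
  constructor
  · refine sigmaLevel_le (by omega : 4 ≤ 5) (sigmaLevel_iUnion fun k => ?_)
    cases h : c k with
    | none => simp only [h, Option.elim, Set.preimage_empty]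
              exact clopen_mem_sigmaLevel isClopen_empty 4
    | some L => simp only [h, Option.elim]
                exact (phiX_cyl_levels π onv zav L).1
  · rw [Set.compl_iUnion]
    refine sigmaLevel_iInter_succ (n := 4) fun k => ?_
    rw [compl_compl]
    cases h : c k with
    | none => simp only [h, Option.elim, Set.preimage_empty]
              exact clopen_mem_sigmaLevel isClopen_empty 4
    | some L => simp only [h, Option.elim]
                exact (phiX_cyl_levels π onv zav L).1

def Atilde (B' : Set (ℕ → S)) : Set (ℕ → S) :=
  GoodXset π onv zav ∩ PhiX π onv zav ⁻¹' B'

lemma atilde_mem_gamma (Γ : Pointclass) (hΓ : Reasonable Γ) (B' : Set (ℕ → S))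
    (hB : B' ∈ Γ.mem (ℕ → S)) : Atilde π onv zav B' ∈ Γ.mem (ℕ → S) := by
  rw [Atilde, Set.inter_comm]
  exact hΓ.inter_delta _ _ _
    (hΓ.delta_subst _ _ (PhiX π onv zav) (phiX_delta06 π onv zav) B' hB)
    (goodXset_delta π onv zav)

lemma cohX_shift {g : G} {y y' : G → S} (hsh : ∀ h : G, y' h = y (g⁻¹ * h)) (p : G) :
    CohX π onv zav p (fun n => y' (π n)) ↔ CohX π onv zav (g⁻¹ * p) (fun n => y (π n)) := by
  have key : ∀ t : ℕ, (fun n => y' (π n)) (π.symm (p * π t)) =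
      (fun n => y (π n)) (π.symm ((g⁻¹ * p) * π t)) := by
    intro t
    simp only [Equiv.apply_symm_apply]
    rw [hsh, mul_assoc]
  constructor
  · rintro ⟨h1, h2⟩
    exact ⟨fun i => by rw [← key]; exact h1 i, fun i => by rw [← key]; exact h2 i⟩
  · rintro ⟨h1, h2⟩
    exact ⟨fun i => by rw [key]; exact h1 i, fun i => by rw [key]; exact h2 i⟩

lemma goodX_shift {g : G} {y y' : G → S} (hsh : ∀ h : G, y' h = y (g⁻¹ * h)) :
    GoodX π onv zav (fun n => y' (π n)) ↔ GoodX π onv zav (fun n => y (π n)) := by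
  constructor
  · rintro ⟨p, hp, hu⟩
    refine ⟨g⁻¹ * p, (cohX_shift π onv zav hsh p).1 hp, fun q hq => ?_⟩
    have : CohX π onv zav (g * q) (fun n => y' (π n)) := by
      rw [cohX_shift π onv zav hsh]
      rw [inv_mul_cancel_left]
      exact hq
    have h4 := hu _ this
    rw [← h4, inv_mul_cancel_left]
  · rintro ⟨p, hp, hu⟩
    refine ⟨g * p, ?_, fun q hq => ?_⟩
    · show CohX π onv zav (g * p) fun n => y' (π n)
      rw [cohX_shift π onv zav hsh, inv_mul_cancel_left]
      exact hp
    · have := hu _ ((cohX_shift π onv zav hsh q).1 hq)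
      rw [← this, mul_inv_cancel_left]

lemma atilde_shift_inv (B' : Set (ℕ → S)) {g : G} {y y' : G → S}
    (hsh : ∀ h : G, y' h = y (g⁻¹ * h)) :
    ((fun n => y (π n)) ∈ Atilde π onv zav B' ↔ (fun n => y' (π n)) ∈ Atilde π onv zav B') := by
  by_cases hg : GoodX π onv zav (fun n => y (π n))
  · have hg' : GoodX π onv zav (fun n => y' (π n)) := (goodX_shift π onv zav hsh).2 hg
    have hanch : anchX π onv zav (fun n => y' (π n)) =
        g * anchX π onv zav (fun n => y (π n)) := by
      have h1 := (anchX_spec π onv zav hg').1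
      have h2 := (anchX_spec π onv zav hg).2
      have := (cohX_shift π onv zav hsh _).1 h1
      have h3 := h2 _ this
      rw [← h3, mul_inv_cancel_left]
    have hphi : PhiX π onv zav (fun n => y' (π n)) = PhiX π onv zav (fun n => y (π n)) := by
      funext k
      rw [PhiX, PhiX, hanch]
      simp only [Equiv.apply_symm_apply]
      rw [hsh]
      congr 1
      rw [← mul_assoc, ← mul_assoc, inv_mul_cancel, one_mul]
    simp only [Atilde, Set.mem_inter_iff, Set.mem_preimage, hphi]
    simp only [GoodXset, Set.mem_setOf_eq, hg, hg', true_and]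
  · have hg' : ¬ GoodX π onv zav (fun n => y' (π n)) := by
      rw [goodX_shift π onv zav hsh]; exact hg
    simp only [Atilde, Set.mem_inter_iff, GoodXset, Set.mem_setOf_eq, hg, hg', false_and]

end Main3
section Transfer
set_option linter.unusedSectionVars false
set_option maxHeartbeats 1000000
variable {S : Type} [Inhabited S]

lemma initSeg_succ (x : ℕ → S) (n : ℕ) : initSeg x (n+1) = initSeg x n ++ [x n] := by
  simp only [initSeg, List.ofFn_succ', List.concat_eq_append, Fin.coe_castSucc, Fin.val_last]

lemma getD_append_len (l : List S) (a d : S) : (l ++ [a]).getD l.length d = a := by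
  rw [List.getD_eq_getElem?_getD, List.getElem?_concat_length]
  rfl

lemma getD_append_at (l : List S) (a d : S) (n : ℕ) (h : l.length = n) :
    (l ++ [a]).getD n d = a := by
  subst h; exact getD_append_len l a d

lemma getD_append_lt (l : List S) (a d : S) (i : ℕ) (h : i < l.length) :
    (l ++ [a]).getD i d = l.getD i d := by
  rw [List.getD_eq_getElem?_getD, List.getD_eq_getElem?_getD, List.getElem?_append_left h]

/-- Virtual prefix for the simulation where player I follows `σ` and the odd (opponent)
moves are provided by `w`. -/
def vpreI (σ : List S → S) (w : ℕ → S) : ℕ → List S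
  | 0 => []
  | n + 1 => vpreI σ w n ++ [if Even n then σ (vpreI σ w n) else w n]

/-- Virtual prefix for the simulation where player II follows `τ` and the even moves
are provided by `w`. -/
def vpreII (τ : List S → S) (w : ℕ → S) : ℕ → List S
  | 0 => []
  | n + 1 => vpreII τ w n ++ [if Even n then w n else τ (vpreII τ w n)]

lemma vpreI_length (σ : List S → S) (w : ℕ → S) (n : ℕ) : (vpreI σ w n).length = n := by
  induction n with
  | zero => rfl
  | succ n ih => simp [vpreI, ih]

lemma vpreII_length (τ : List S → S) (w : ℕ → S) (n : ℕ) : (vpreII τ w n).length = n := by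
  induction n with
  | zero => rfl
  | succ n ih => simp [vpreII, ih]

def xRunI (σ : List S → S) (w : ℕ → S) : ℕ → S := fun n => (vpreI σ w (n+1)).getD n default
def xRunII (τ : List S → S) (w : ℕ → S) : ℕ → S := fun n => (vpreII τ w (n+1)).getD n default

lemma xRunI_eq (σ : List S → S) (w : ℕ → S) (n : ℕ) :
    xRunI σ w n = if Even n then σ (vpreI σ w n) else w n := by
  rw [xRunI]
  show (vpreI σ w n ++ [if Even n then σ (vpreI σ w n) else w n]).getD n default = _
  exact getD_append_at _ _ _ _ (vpreI_length σ w n)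

lemma xRunII_eq (τ : List S → S) (w : ℕ → S) (n : ℕ) :
    xRunII τ w n = if Even n then w n else τ (vpreII τ w n) := by
  rw [xRunII]
  show (vpreII τ w n ++ [if Even n then w n else τ (vpreII τ w n)]).getD n default = _
  exact getD_append_at _ _ _ _ (vpreII_length τ w n)

lemma initSeg_xRunI (σ : List S → S) (w : ℕ → S) (n : ℕ) :
    initSeg (xRunI σ w) n = vpreI σ w n := by
  induction n with
  | zero => rfl
  | succ n ih =>
    rw [initSeg_succ, ih, vpreI]
    congr 1
    rw [xRunI_eq]

lemma initSeg_xRunII (τ : List S → S) (w : ℕ → S) (n : ℕ) :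
    initSeg (xRunII τ w) n = vpreII τ w n := by
  induction n with
  | zero => rfl
  | succ n ih =>
    rw [initSeg_succ, ih, vpreII]
    congr 1
    rw [xRunII_eq]

lemma followsI_xRunI (σ : List S → S) (w : ℕ → S) : FollowsStratI σ (xRunI σ w) := by
  intro n
  rw [xRunI_eq, if_pos (even_two_mul n), initSeg_xRunI]

lemma followsII_xRunII (τ : List S → S) (w : ℕ → S) : FollowsStratII τ (xRunII τ w) := by
  intro n
  rw [xRunII_eq, if_neg (by simp [Nat.even_add_one]), initSeg_xRunII]

lemma vpreI_congr (σ : List S → S) (w1 w2 : ℕ → S) (m : ℕ)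
    (h : ∀ t < m, w1 t = w2 t) : vpreI σ w1 m = vpreI σ w2 m := by
  induction m with
  | zero => rfl
  | succ m ih =>
    have ihm := ih (fun t ht => h t (by omega))
    rw [vpreI, vpreI, ihm, h m (by omega)]

lemma vpreII_congr (τ : List S → S) (w1 w2 : ℕ → S) (m : ℕ)
    (h : ∀ t < m, w1 t = w2 t) : vpreII τ w1 m = vpreII τ w2 m := by
  induction m with
  | zero => rfl
  | succ m ih =>
    have ihm := ih (fun t ht => h t (by omega))
    rw [vpreII, vpreII, ihm, h m (by omega)]

lemma vpreI_getD_stable (σ : List S → S) (w : ℕ → S) {i m : ℕ} (h : i < m) :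
    (vpreI σ w m).getD i default = xRunI σ w i := by
  induction m with
  | zero => omega
  | succ m ih =>
    rcases Nat.lt_or_ge i m with him | him
    · rw [vpreI, getD_append_lt _ _ _ _ (by rw [vpreI_length]; omega)]
      exact ih him
    · have : i = m := by omega
      subst this
      rfl

lemma vpreII_getD_stable (τ : List S → S) (w : ℕ → S) {i m : ℕ} (h : i < m) :
    (vpreII τ w m).getD i default = xRunII τ w i := by
  induction m with
  | zero => omega
  | succ m ih =>
    rcases Nat.lt_or_ge i m with him | him
    · rw [vpreII, getD_append_lt _ _ _ _ (by rw [vpreII_length]; omega)]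
      exact ih him
    · have : i = m := by omega
      subst this
      rfl

end Transfer
section Transfer2
set_option linter.unusedSectionVars false
set_option maxHeartbeats 1000000
variable {S : Type} [TopologicalSpace S] [DiscreteTopology S] [Countable S] [Inhabited S]
variable {G : Type} [Group G] [Countable G] [Infinite G]
variable (π : ℕ ≃ G) (onv zav : S)

def hIIw (zav : S) (r : ℕ → S) : ℕ → S :=
  fun t => if t % 6 = 5 ∧ Odd (t / 6) then r (t / 6) else zav

def hIw (onv zav : S) (r : ℕ → S) : ℕ → S := fun t =>
  if t % 6 = 0 then onv else if t % 6 = 4 ∧ Even (t / 6) then r (t / 6) else zav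

lemma transfer_I (hne : onv ≠ zav)
    (hC2 : ∀ p : G, p ≠ 1 → ∃ i j : ℕ, p * π (6*i) = π (6*j+3))
    (B' : Set (ℕ → S)) (σ : List S → S)
    (hσ : ∀ x, FollowsStratI σ x → x ∈ Atilde π onv zav B') :
    ∃ σB : List S → S, ∀ r, FollowsStratI σB r → r ∈ B' := by
  classical
  refine ⟨fun p => (vpreI σ (hIIw zav (fun i => p.getD i default)) (6 * p.length + 5)).getD
    (6 * p.length + 4) default, ?_⟩
  intro r hr
  set w : ℕ → S := hIIw zav r with hw
  set x : ℕ → S := xRunI σ w with hx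
  have hmem := hσ x (followsI_xRunI σ w)
  have hodd : ∀ t, ¬ Even t → x t = w t := by
    intro t ht
    rw [hx, xRunI_eq, if_neg ht]
  have h3 : ∀ i, x (6*i+3) = zav := by
    intro i
    rw [hodd (6*i+3) (by rw [Nat.even_iff]; omega), hw]
    simp only [hIIw]
    exact if_neg (fun h => by omega)
  have hgood : GoodX π onv zav x := hmem.1
  have href := refute_via_II π onv zav hne hC2 h3
  have hanch : anchX π onv zav x = 1 := by
    by_contra hne1
    exact href _ hne1 (anchX_spec π onv zav hgood).1
  have hphi1 := phiX_of_anch_one π onv zav hanch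
  have key : ∀ k, x (dIdx k) = r k := by
    intro k
    by_cases hk : Even k
    · obtain ⟨n, hn⟩ := hk
      have hk2 : k = 2 * n := by omega
      subst hk2
      have hdi : dIdx (2*n) = 6*(2*n)+4 := if_pos (even_two_mul n)
      have hrn := hr n
      have hlen : (initSeg r (2*n)).length = 2*n := initSeg_length
      rw [hrn]
      show x (dIdx (2*n)) =
        (vpreI σ (hIIw zav (fun i => (initSeg r (2*n)).getD i default))
          (6 * (initSeg r (2*n)).length + 5)).getD (6 * (initSeg r (2*n)).length + 4) default
      rw [hlen]
      have hcongr : vpreI σ (hIIw zav (fun i => (initSeg r (2*n)).getD i default))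
          (6 * (2*n) + 5) = vpreI σ w (6 * (2*n) + 5) := by
        apply vpreI_congr
        intro t ht
        rw [hw]
        simp only [hIIw]
        by_cases hc : t % 6 = 5 ∧ Odd (t / 6)
        · rw [if_pos hc, if_pos hc]
          exact initSeg_getD (by omega) default
        · rw [if_neg hc, if_neg hc]
      rw [hcongr, vpreI_getD_stable σ w (by omega : 6*(2*n)+4 < 6*(2*n)+5)]
      rw [hdi]
    · have hdi : dIdx k = 6*k+5 := if_neg hk
      have hcond : (6*k+5) % 6 = 5 ∧ Odd ((6*k+5) / 6) := by
        refine ⟨by omega, ?_⟩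
        rw [show (6*k+5)/6 = k by omega]
        rw [Nat.odd_iff]
        rw [Nat.even_iff] at hk
        omega
      rw [hdi, hodd (6*k+5) (by rw [Nat.even_iff]; omega), hw]
      simp only [hIIw]
      rw [if_pos hcond, show (6*k+5)/6 = k by omega]
  have hfun : PhiX π onv zav x = r := funext fun k => by rw [hphi1 k, key k]
  have := hmem.2
  rw [Set.mem_preimage, hfun] at this
  exact this

end Transfer2
section Transfer3
set_option linter.unusedSectionVars false
set_option maxHeartbeats 1000000
variable {S : Type} [TopologicalSpace S] [DiscreteTopology S] [Countable S] [Inhabited S]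
variable {G : Type} [Group G] [Countable G] [Infinite G]
variable (π : ℕ ≃ G) (onv zav : S)

lemma transfer_II (hne : onv ≠ zav)
    (hC1 : ∀ p : G, p ≠ 1 → ∃ i j : ℕ, p * π (6*i) = π (6*j+2))
    (B' : Set (ℕ → S)) (τ : List S → S)
    (hτ : ∀ x, FollowsStratII τ x → x ∉ Atilde π onv zav B') :
    ∃ τB : List S → S, ∀ r, FollowsStratII τB r → r ∉ B' := by
  classical
  refine ⟨fun p => (vpreII τ (hIw onv zav (fun i => p.getD i default)) (6 * p.length + 6)).getD
    (6 * p.length + 5) default, ?_⟩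
  intro r hr
  set w : ℕ → S := hIw onv zav r with hw
  set x : ℕ → S := xRunII τ w with hx
  have hnot := hτ x (followsII_xRunII τ w)
  have heven : ∀ t, Even t → x t = w t := by
    intro t ht
    rw [hx, xRunII_eq, if_pos ht]
  have h0 : ∀ i, x (6*i) = onv := by
    intro i
    rw [heven (6*i) (by rw [Nat.even_iff]; omega), hw]
    simp only [hIw]
    rw [if_pos (by omega : (6*i) % 6 = 0)]
  have h2 : ∀ i, x (6*i+2) = zav := by
    intro i
    rw [heven (6*i+2) (by rw [Nat.even_iff]; omega), hw]
    simp only [hIw]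
    rw [if_neg (by omega : ¬ (6*i+2) % 6 = 0), if_neg (fun h => by omega)]
  have hcoh1 := cohX_one π onv zav h0 h2
  have href := refute_via_I π onv zav hne hC1 h2
  obtain ⟨hgood, hanch⟩ := goodX_of_refute π onv zav hcoh1 href
  have hphi1 := phiX_of_anch_one π onv zav hanch
  have key : ∀ k, x (dIdx k) = r k := by
    intro k
    by_cases hk : Even k
    · have hdi : dIdx k = 6*k+4 := if_pos hk
      have hcond : (6*k+4) % 6 = 4 ∧ Even ((6*k+4) / 6) := by
        refine ⟨by omega, ?_⟩
        rw [show (6*k+4)/6 = k by omega]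
        exact hk
      rw [hdi, heven (6*k+4) (by rw [Nat.even_iff]; omega), hw]
      simp only [hIw]
      rw [if_neg (by omega : ¬ (6*k+4) % 6 = 0), if_pos hcond,
        show (6*k+4)/6 = k by omega]
    · have hk1 : k % 2 = 1 := by rw [Nat.even_iff] at hk; omega
      set n := k / 2 with hn
      have hk2 : k = 2 * n + 1 := by omega
      have hrn := hr n
      rw [← hk2] at hrn
      have hlen : (initSeg r k).length = k := initSeg_length
      have hdi : dIdx k = 6*k+5 := if_neg hk
      rw [hrn]
      show x (dIdx k) =
        (vpreII τ (hIw onv zav (fun i => (initSeg r k).getD i default))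
          (6 * (initSeg r k).length + 6)).getD (6 * (initSeg r k).length + 5) default
      rw [hlen]
      have hcongr : vpreII τ (hIw onv zav (fun i => (initSeg r k).getD i default))
          (6 * k + 6) = vpreII τ w (6 * k + 6) := by
        apply vpreII_congr
        intro t ht
        rw [hw]
        simp only [hIw]
        by_cases hc0 : t % 6 = 0
        · rw [if_pos hc0, if_pos hc0]
        · rw [if_neg hc0, if_neg hc0]
          by_cases hc : t % 6 = 4 ∧ Even (t / 6)
          · rw [if_pos hc, if_pos hc]
            have hev := hc.2
            rw [Nat.even_iff] at hev
            exact initSeg_getD (by omega) default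
          · rw [if_neg hc, if_neg hc]
      rw [hcongr, vpreII_getD_stable τ w (by omega : 6*k+5 < 6*k+6), hdi]
  have hfun : PhiX π onv zav x = r := funext fun k => by rw [hphi1 k, key k]
  intro hrB
  apply hnot
  refine ⟨hgood, ?_⟩
  rw [Set.mem_preimage, hfun]
  exact hrB

lemma main_det (hne : onv ≠ zav) (Γ : Pointclass) (hΓ : Reasonable Γ)
    (hdet : GammaShiftDet Γ G S) : GammaDetOn Γ S := by
  intro B' hB
  obtain ⟨π', hπ'⟩ := exists_nice_enum G
  have hC1 : ∀ p : G, p ≠ 1 → ∃ i j : ℕ, p * π' (6*i) = π' (6*j+2) :=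
    fun p hp => (hπ' p hp).1
  have hC2 : ∀ p : G, p ≠ 1 → ∃ i j : ℕ, p * π' (6*i) = π' (6*j+3) :=
    fun p hp => (hπ' p hp).2
  set A1 : Set (G → S) :=
    (fun (y : G → S) (n : ℕ) => y (π' n)) ⁻¹' (Atilde π' onv zav B') with hA1
  have hmem : A1 ∈ Γ.mem (G → S) := by
    apply Γ.continuous_preimage (G → S) (ℕ → S) _ ?_ _ (atilde_mem_gamma π' onv zav Γ hΓ B' hB)
    exact continuous_pi fun n => continuous_apply (π' n)
  have hinv : ∀ y y' : G → S, ShiftRel G y y' → (y ∈ A1 ↔ y' ∈ A1) := by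
    rintro y y' ⟨g, hg⟩
    exact atilde_shift_inv π' onv zav B' hg
  have hdet1 := hdet A1 hmem hinv π'
  have hset : {x : ℕ → S | (fun g => x (π'.symm g)) ∈ A1} = Atilde π' onv zav B' := by
    ext x
    simp only [Set.mem_setOf_eq, hA1, Set.mem_preimage]
    have hxx : (fun n => (fun g => x (π'.symm g)) (π' n)) = x := funext fun n => by
      simp only [Equiv.symm_apply_apply]
    rw [hxx]
  rw [hset] at hdet1
  rcases hdet1 with ⟨σ, hσ⟩ | ⟨τ, hτ⟩
  · obtain ⟨σB, hσB⟩ := transfer_I π' onv zav hne hC2 B' σ hσ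
    exact Or.inl ⟨σB, hσB⟩
  · obtain ⟨τB, hτB⟩ := transfer_II π' onv zav hne hC1 B' τ hτ
    exact Or.inr ⟨τB, hτB⟩

end Transfer3
theorem stmt2 (G : Type) [Group G] [Countable G]
    (hwa : ∃ H : Subgroup G, Infinite H ∧ WeaklyAmenable H)
    (Γ : Pointclass) (hΓ : Reasonable Γ) :
    (GammaShiftDet Γ G Bool → GammaDetOn Γ Bool) ∧
    (GammaShiftDet Γ G ℕ → GammaDetOn Γ ℕ) := by
  obtain ⟨H, hHinf, -⟩ := hwa
  haveI := hHinf
  haveI : Infinite G := Infinite.of_injective (Subtype.val : H → G) Subtype.coe_injective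
  constructor
  · intro hdet
    exact main_det (onv := true) (zav := false) (by decide) Γ hΓ hdet
  · intro hdet
    exact main_det (onv := 1) (zav := 0) one_ne_zero Γ hΓ hdet
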